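/- For every δ with 0 < δ < 1, ∑_{k=1}^∞ ℓ_k^{-δ} = 1/(2^δ − 1) − ∑_{k=1}^∞ ∫_{p_k}^{p_{k+1}} δ·x^{δ−1}·e^{−δ·ϑ(p_k)}/(x^δ − 1)² dx. -/

import Mathlib

open Finset Filter Real MeasureTheory intervalIntegral

/-- `ell k` is the product of the first `k` primes, `ℓ_k = p_1 ⋯ p_k`. -/
noncomputable def ell (k : ℕ) : ℕ := ∏ i ∈ Finset.range k, Nat.nth Nat.Prime i

/-- Chebyshev's function `ϑ(x) = ∑_{p ≤ x, p prime} log p`. -/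
noncomputable def theta (x : ℝ) : ℝ :=
  ∑ p ∈ (Finset.range (⌊x⌋₊ + 1)).filter Nat.Prime, Real.log p

lemma hr_two_le_nth (k : ℕ) : 2 ≤ Nat.nth Nat.Prime k := (Nat.prime_nth_prime k).two_le

lemma hr_filter_range_eq (k : ℕ) :
    (Finset.range (Nat.nth Nat.Prime k + 1)).filter Nat.Prime
      = (Finset.range (k + 1)).image (Nat.nth Nat.Prime) := by
  ext p
  simp only [Finset.mem_filter, Finset.mem_range, Finset.mem_image, Nat.lt_succ_iff]
  constructor
  · rintro ⟨hle, hp⟩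
    exact ⟨Nat.count Nat.Prime p, Nat.le_nth_of_count_le hle, Nat.nth_count hp⟩
  · rintro ⟨i, hi, rfl⟩
    exact ⟨(Nat.nth_le_nth Nat.infinite_setOf_prime).2 hi, Nat.prime_nth_prime i⟩

lemma hr_theta_nth (k : ℕ) :
    theta (Nat.nth Nat.Prime k) = Real.log (ell (k + 1)) := by
  rw [theta, Nat.floor_natCast, hr_filter_range_eq,
    Finset.sum_image (fun i _ j _ h => Nat.nth_injective Nat.infinite_setOf_prime h),
    ell, Nat.cast_prod,
    Real.log_prod (fun i _ => by
      exact_mod_cast (Nat.prime_nth_prime i).pos.ne')]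

lemma hr_ell_pos (k : ℕ) : 0 < ell k :=
  Finset.prod_pos fun i _ => (Nat.prime_nth_prime i).pos

lemma hr_exp_theta (δ : ℝ) (k : ℕ) :
    Real.exp (-δ * theta (Nat.nth Nat.Prime k)) = (ell (k + 1) : ℝ) ^ (-δ) := by
  have hℓ : (0 : ℝ) < (ell (k + 1) : ℝ) := by exact_mod_cast hr_ell_pos (k + 1)
  rw [hr_theta_nth, Real.rpow_def_of_pos hℓ, mul_comm]

lemma hr_two_pow_le_ell (k : ℕ) : 2 ^ k ≤ ell k := by
  induction k with
  | zero => simp [ell]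
  | succ n ih =>
    rw [ell, Finset.prod_range_succ, pow_succ]
    exact Nat.mul_le_mul ih (hr_two_le_nth n)

lemma hr_integral_eval (δ : ℝ) (hδ : 0 < δ) (E : ℝ) {a b : ℝ} (ha : 2 ≤ a) (hab : a ≤ b) :
    (∫ x in a..b, δ * x ^ (δ - 1) * E / (x ^ δ - 1) ^ 2)
      = E * ((a ^ δ - 1)⁻¹ - (b ^ δ - 1)⁻¹) := by
  have hmem : ∀ x ∈ Set.uIcc a b, 2 ≤ x := by
    intro x hx
    rw [Set.uIcc_of_le hab] at hx
    exact ha.trans hx.1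
  have hne : ∀ x ∈ Set.uIcc a b, x ^ δ - 1 ≠ 0 := by
    intro x hx
    have h2 := hmem x hx
    have : (1:ℝ) < x ^ δ :=
      (Real.one_lt_rpow_iff_of_pos (by linarith)).2 (Or.inl ⟨by linarith, hδ⟩)
    linarith
  have hderiv : ∀ x ∈ Set.uIcc a b,
      HasDerivAt (fun y => -E * (y ^ δ - 1)⁻¹)
        (δ * x ^ (δ - 1) * E / (x ^ δ - 1) ^ 2) x := by
    intro x hx
    have h2 := hmem x hx
    have h1 : HasDerivAt (fun y : ℝ => y ^ δ - 1) (δ * x ^ (δ - 1)) x := by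
      simpa using (Real.hasDerivAt_rpow_const (p := δ)
        (Or.inl (by linarith : x ≠ 0))).sub_const 1
    have h3 := (h1.inv (hne x hx)).const_mul (-E)
    exact h3.congr_deriv (by ring)
  have c1 : ContinuousOn (fun x : ℝ => x ^ (δ - 1)) (Set.uIcc a b) := fun x hx =>
    (Real.continuousAt_rpow_const x _ (Or.inl (by have := hmem x hx; linarith))).continuousWithinAt
  have c2 : ContinuousOn (fun x : ℝ => x ^ δ) (Set.uIcc a b) := fun x hx =>
    (Real.continuousAt_rpow_const x _ (Or.inl (by have := hmem x hx; linarith))).continuousWithinAt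
  have hcont : ContinuousOn (fun x => δ * x ^ (δ - 1) * E / (x ^ δ - 1) ^ 2) (Set.uIcc a b) := by
    refine ContinuousOn.div ((continuousOn_const.mul c1).mul continuousOn_const)
      (((c2.sub continuousOn_const)).pow 2) (fun x hx => pow_ne_zero 2 (hne x hx))
  rw [integral_eq_sub_of_hasDerivAt hderiv (hcont.intervalIntegrable)]
  ring

noncomputable def hrL (δ : ℝ) (k : ℕ) : ℝ := (ell (k + 1) : ℝ) ^ (-δ)
noncomputable def hrb (δ : ℝ) (k : ℕ) : ℝ := ((Nat.nth Nat.Prime k : ℝ) ^ δ - 1)⁻¹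

/-- The Hardy–Ramanujan identity: for `0 < δ < 1`,
`∑_{k≥1} ℓ_k^{-δ} = 1/(2^δ - 1) - ∑_{k≥1} ∫_{p_k}^{p_{k+1}} δ x^{δ-1} e^{-δ ϑ(p_k)}/(x^δ-1)² dx`. -/
theorem hardy_ramanujan_identity (δ : ℝ) (hδ : 0 < δ) (hδ' : δ < 1) :
    ∑' k : ℕ, (ell (k + 1) : ℝ) ^ (-δ) =
      1 / (2 ^ δ - 1) -
        ∑' k : ℕ, ∫ x in (Nat.nth Nat.Prime k : ℝ)..(Nat.nth Nat.Prime (k + 1) : ℝ),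
          δ * x ^ (δ - 1) * Real.exp (-δ * theta (Nat.nth Nat.Prime k)) / (x ^ δ - 1) ^ 2 := by
  have h2q : ∀ k, (2 : ℝ) ≤ (Nat.nth Nat.Prime k : ℝ) := fun k => by
    exact_mod_cast hr_two_le_nth k
  have hqmono : ∀ k, (Nat.nth Nat.Prime k : ℝ) ≤ (Nat.nth Nat.Prime (k + 1) : ℝ) := fun k => by
    exact_mod_cast ((Nat.nth_le_nth Nat.infinite_setOf_prime).2 (Nat.le_succ k))
  have hu2 : (1 : ℝ) < 2 ^ δ :=
    (Real.one_lt_rpow_iff_of_pos two_pos).2 (Or.inl ⟨one_lt_two, hδ⟩)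
  have huk : ∀ k, (2 : ℝ) ^ δ ≤ (Nat.nth Nat.Prime k : ℝ) ^ δ := fun k =>
    Real.rpow_le_rpow (by norm_num) (h2q k) hδ.le
  have hu1 : ∀ k, (1 : ℝ) < (Nat.nth Nat.Prime k : ℝ) ^ δ := fun k => lt_of_lt_of_le hu2 (huk k)
  have hbpos : ∀ k, 0 < hrb δ k := fun k => inv_pos.2 (by have := hu1 k; linarith)
  have hbB : ∀ k, hrb δ k ≤ ((2 : ℝ) ^ δ - 1)⁻¹ := fun k =>
    inv_anti₀ (by linarith) (by have := huk k; linarith)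
  have hbanti : ∀ k, hrb δ (k + 1) ≤ hrb δ k := fun k =>
    inv_anti₀ (by have := hu1 k; linarith)
      (by
        have : (Nat.nth Nat.Prime k : ℝ) ^ δ ≤ (Nat.nth Nat.Prime (k + 1) : ℝ) ^ δ :=
          Real.rpow_le_rpow (by linarith [h2q k]) (hqmono k) hδ.le
        linarith)
  have hLpos : ∀ k, 0 < hrL δ k := fun k =>
    Real.rpow_pos_of_pos (by exact_mod_cast hr_ell_pos (k + 1)) _
  -- recursion for L
  have hLrec : ∀ k, hrL δ (k + 1) = hrL δ k * (Nat.nth Nat.Prime (k + 1) : ℝ) ^ (-δ) := by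
    intro k
    have hcast : (ell (k + 2) : ℝ) = (ell (k + 1) : ℝ) * (Nat.nth Nat.Prime (k + 1) : ℝ) := by
      rw [ell, ell, Finset.prod_range_succ]
      push_cast
      ring
    rw [hrL, hrL, hcast, Real.mul_rpow (by positivity) (by linarith [h2q (k + 1)])]
  -- evaluation of each integral
  have hInt : ∀ k, (∫ x in (Nat.nth Nat.Prime k : ℝ)..(Nat.nth Nat.Prime (k + 1) : ℝ),
      δ * x ^ (δ - 1) * Real.exp (-δ * theta (Nat.nth Nat.Prime k)) / (x ^ δ - 1) ^ 2)
        = hrL δ k * (hrb δ k - hrb δ (k + 1)) := by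
    intro k
    rw [hr_integral_eval δ hδ _ (h2q k) (hqmono k), hr_exp_theta]
    rfl
  -- per-term identity
  have hterm : ∀ k, hrL δ k * (hrb δ k - hrb δ (k + 1))
      = (hrL δ k * hrb δ k - hrL δ (k + 1) * hrb δ (k + 1)) - hrL δ (k + 1) := by
    intro k
    have hv : (Nat.nth Nat.Prime (k + 1) : ℝ) ^ (-δ)
        = ((Nat.nth Nat.Prime (k + 1) : ℝ) ^ δ)⁻¹ :=
      Real.rpow_neg (by linarith [h2q (k + 1)]) δ
    set u : ℝ := (Nat.nth Nat.Prime (k + 1) : ℝ) ^ δ with hu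
    have hu1' : (1 : ℝ) < u := hu1 (k + 1)
    have h0 : u ≠ 0 := by linarith
    have h1 : u - 1 ≠ 0 := sub_ne_zero.2 (by linarith)
    have hb1 : hrb δ (k + 1) = (u - 1)⁻¹ := rfl
    have key : (u - 1)⁻¹ = u⁻¹ * (u - 1)⁻¹ + u⁻¹ := by
      field_simp
      ring
    rw [hLrec k, hv, hb1]
    linear_combination (-(hrL δ k)) * key
  -- summability of L
  have hLgeo : ∀ k, hrL δ k ≤ ((2 : ℝ) ^ (-δ)) ^ (k + 1) := by
    intro k
    have h1 : hrL δ k ≤ ((2 : ℝ) ^ (k + 1)) ^ (-δ) := by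
      apply Real.rpow_le_rpow_of_nonpos (by positivity) _ (by linarith)
      exact_mod_cast hr_two_pow_le_ell (k + 1)
    refine h1.trans_eq ?_
    rw [← Real.rpow_natCast (2 : ℝ) (k + 1), ← Real.rpow_natCast ((2 : ℝ) ^ (-δ)) (k + 1),
      ← Real.rpow_mul (by norm_num), ← Real.rpow_mul (by norm_num), mul_comm]
  have hr01 : (2 : ℝ) ^ (-δ) < 1 :=
    Real.rpow_lt_one_of_one_lt_of_neg one_lt_two (by linarith)
  have hrpos : (0 : ℝ) ≤ (2 : ℝ) ^ (-δ) := (Real.rpow_pos_of_pos two_pos _).le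
  have hgeo : Summable fun k : ℕ => ((2 : ℝ) ^ (-δ)) ^ (k + 1) :=
    (summable_nat_add_iff 1).2 (summable_geometric_of_lt_one hrpos hr01)
  have hSummL : Summable (hrL δ) :=
    Summable.of_nonneg_of_le (fun k => (hLpos k).le) hLgeo hgeo
  have hSummL1 : Summable fun k => hrL δ (k + 1) := (summable_nat_add_iff 1).2 hSummL
  -- summability of the integrals
  have hSummI : Summable fun k => hrL δ k * (hrb δ k - hrb δ (k + 1)) := by
    apply Summable.of_nonneg_of_le
      (fun k => mul_nonneg (hLpos k).le (by linarith [hbanti k]))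
      (fun k => ?_) (hSummL.mul_right (((2 : ℝ) ^ δ - 1)⁻¹))
    apply mul_le_mul_of_nonneg_left _ (hLpos k).le
    have := hbpos (k + 1); have := hbB k
    linarith
  -- f := L * b tends to 0
  have hf0 : Tendsto (fun k => hrL δ k * hrb δ k) atTop (nhds 0) := by
    have hle : ∀ k, hrL δ k * hrb δ k ≤ hrL δ k * ((2 : ℝ) ^ δ - 1)⁻¹ := fun k =>
      mul_le_mul_of_nonneg_left (hbB k) (hLpos k).le
    have h0 : Tendsto (fun k => hrL δ k * ((2 : ℝ) ^ δ - 1)⁻¹) atTop (nhds 0) := by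
      simpa using hSummL.tendsto_atTop_zero.mul_const (((2 : ℝ) ^ δ - 1)⁻¹)
    exact squeeze_zero (fun k => mul_nonneg (hLpos k).le (hbpos k).le) hle h0
  -- summability and sum of the telescoping part
  have hSummg : Summable fun k => hrL δ k * hrb δ k - hrL δ (k + 1) * hrb δ (k + 1) := by
    have : (fun k => hrL δ k * hrb δ k - hrL δ (k + 1) * hrb δ (k + 1))
        = fun k => hrL δ k * (hrb δ k - hrb δ (k + 1)) + hrL δ (k + 1) := by
      funext k; have := hterm k; linarith
    rw [this]
    exact hSummI.add hSummL1
  have htsumg : ∑' k, (hrL δ k * hrb δ k - hrL δ (k + 1) * hrb δ (k + 1))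
      = hrL δ 0 * hrb δ 0 := by
    have h1 := hSummg.hasSum.tendsto_sum_nat
    have h2 : ∀ n : ℕ, ∑ i ∈ Finset.range n,
        (hrL δ i * hrb δ i - hrL δ (i + 1) * hrb δ (i + 1))
          = hrL δ 0 * hrb δ 0 - hrL δ n * hrb δ n := fun n =>
      Finset.sum_range_sub' (fun i => hrL δ i * hrb δ i) n
    simp only [h2] at h1
    have h3 : Tendsto (fun n => hrL δ 0 * hrb δ 0 - hrL δ n * hrb δ n) atTop
        (nhds (hrL δ 0 * hrb δ 0)) := by
      simpa using (tendsto_const_nhds (x := hrL δ 0 * hrb δ 0)).sub hf0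
    exact tendsto_nhds_unique h1 h3
  -- compute tsum of integrals
  have hI : ∑' k, (∫ x in (Nat.nth Nat.Prime k : ℝ)..(Nat.nth Nat.Prime (k + 1) : ℝ),
      δ * x ^ (δ - 1) * Real.exp (-δ * theta (Nat.nth Nat.Prime k)) / (x ^ δ - 1) ^ 2)
        = hrL δ 0 * hrb δ 0 - (∑' k, hrL δ k - hrL δ 0) := by
    rw [tsum_congr (fun k => (hInt k).trans (hterm k)), Summable.tsum_sub hSummg hSummL1, htsumg,
      Summable.tsum_eq_zero_add hSummL]
    ring
  rw [show (∑' k : ℕ, (ell (k + 1) : ℝ) ^ (-δ)) = ∑' k, hrL δ k from rfl, hI]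
  -- final arithmetic
  have hL0 : hrL δ 0 = ((2 : ℝ) ^ δ)⁻¹ := by
    have he : ell 1 = 2 := by simp [ell, Nat.nth_prime_zero_eq_two]
    rw [hrL, he, Real.rpow_neg (by norm_num)]
    norm_num
  have hb0 : hrb δ 0 = ((2 : ℝ) ^ δ - 1)⁻¹ := by
    rw [hrb, Nat.nth_prime_zero_eq_two]; norm_num
  rw [hL0, hb0]
  have h0 : (2 : ℝ) ^ δ ≠ 0 := by linarith
  have h1 : (2 : ℝ) ^ δ - 1 ≠ 0 := sub_ne_zero.2 (by linarith)
  have key2 : 1 / ((2 : ℝ) ^ δ - 1)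
      = ((2 : ℝ) ^ δ)⁻¹ * ((2 : ℝ) ^ δ - 1)⁻¹ + ((2 : ℝ) ^ δ)⁻¹ := by
    field_simp
    ring
  linear_combination -key2
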